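/- arXiv:2602.18246 — 4 statements merged into one kernel-verified Lean document; each statement's English description precedes it below -/
import Mathlib

section
/- For every finite simple graph G, the chromatic index of G is at most Δ(G) + 1, where Δ(G) denotes the maximum degree of G (Vizing's theorem). -/
set_option linter.unusedSectionVars false

namespace VizingProof

open SimpleGraph Finset

variable {V : Type*} [Fintype V] [DecidableEq V] {k : ℕ}




lemma degree_le_of_le {H H' : SimpleGraph V} [DecidableRel H.Adj] [DecidableRel H'.Adj]
    (h : H' ≤ H) (v : V) : H'.degree v ≤ H.degree v := by
  apply Finset.card_le_card
  intro u hu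
  rw [SimpleGraph.mem_neighborFinset] at hu ⊢
  exact h hu

/-- Two paths from a degree-≤1 vertex in a max-degree-2 graph: one endpoint lies
on the other path's support. -/
lemma pathA : ∀ (n : ℕ) (H : SimpleGraph V) (_ : DecidableRel H.Adj) (x u w : V)
    (_ : ∀ v, H.degree v ≤ 2) (_ : H.degree x ≤ 1)
    (p : H.Walk x u) (_ : p.IsPath) (q : H.Walk x w) (_ : q.IsPath)
    (_ : p.length = n), u ∈ q.support ∨ w ∈ p.support := by
  intro n
  induction n with
  | zero =>
    intro H _ x u w _ _ p hp q hq hlen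
    cases p with
    | nil => exact Or.inl q.start_mem_support
    | cons h p' => simp at hlen
  | succ n ih =>
    intro H hdec x u w hdeg hx p hp q hq hlen
    cases p with
    | nil => exact Or.inl q.start_mem_support
    | @cons _ a _ h1 p' =>
      cases q with
      | nil => exact Or.inr ((SimpleGraph.Walk.cons h1 p').start_mem_support)
      | @cons _ b _ h2 q' =>
        -- a = b since degree x ≤ 1
        have hab : a = b := by
          have ha : a ∈ H.neighborFinset x := by rwa [SimpleGraph.mem_neighborFinset]
          have hb : b ∈ H.neighborFinset x := by rwa [SimpleGraph.mem_neighborFinset]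
          exact Finset.card_le_one.mp hx a ha b hb
        subst hab
        rw [SimpleGraph.Walk.cons_isPath_iff] at hp hq
        -- transfer to the graph with edge x-a deleted
        set H' : SimpleGraph V := H.deleteEdges {s(x, a)} with hH'
        letI : DecidableRel H'.Adj := fun v w =>
          decidable_of_iff (H.Adj v w ∧ ¬ s(v,w) = s(x,a)) (by simp [hH'])
        have hedges : ∀ (z : V) (r : H.Walk a z), r.IsPath → x ∉ r.support →
            ∀ e ∈ r.edges, e ∈ H'.edgeSet := by
          intro z r hr hxr e he
          rw [hH', SimpleGraph.edgeSet_deleteEdges]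
          refine ⟨r.edges_subset_edgeSet he, ?_⟩
          intro hmem
          rw [Set.mem_singleton_iff] at hmem
          subst hmem
          exact hxr (r.fst_mem_support_of_mem_edges he)
        have hp'e := hedges _ p' hp.1 hp.2
        have hq'e := hedges _ q' hq.1 hq.2
        have hdeg' : ∀ v, H'.degree v ≤ 2 := fun v =>
          le_trans (degree_le_of_le (SimpleGraph.deleteEdges_le _) v) (hdeg v)
        have ha' : H'.degree a ≤ 1 := by
          have hsub : H'.neighborFinset a ⊆ (H.neighborFinset a).erase x := by
            intro u hu
            rw [SimpleGraph.mem_neighborFinset] at hu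
            rw [hH', SimpleGraph.deleteEdges_adj] at hu
            rw [Finset.mem_erase, SimpleGraph.mem_neighborFinset]
            refine ⟨?_, hu.1⟩
            rintro rfl
            exact hu.2 (by rw [Sym2.eq_swap]; exact Set.mem_singleton _)
          calc H'.degree a ≤ ((H.neighborFinset a).erase x).card := Finset.card_le_card hsub
            _ = H.degree a - 1 := by
                rw [Finset.card_erase_of_mem]
                · rfl
                · rw [SimpleGraph.mem_neighborFinset]; exact h1.symm
            _ ≤ 1 := by have := hdeg a; omega
        have := ih H' inferInstance a u w hdeg' ha'
          (p'.transfer H' hp'e) (hp.1.transfer _) (q'.transfer H' hq'e) (hq.1.transfer _)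
          (by rw [SimpleGraph.Walk.length_transfer]; simpa using hlen)
        rw [SimpleGraph.Walk.support_transfer, SimpleGraph.Walk.support_transfer] at this
        rcases this with h | h
        · exact Or.inl (by rw [SimpleGraph.Walk.support_cons]; exact List.mem_cons_of_mem _ h)
        · exact Or.inr (by rw [SimpleGraph.Walk.support_cons]; exact List.mem_cons_of_mem _ h)

/-- An interior vertex of a path has degree at least 2. -/
lemma pathB {H : SimpleGraph V} [DecidableRel H.Adj] {x w u : V}
    (q : H.Walk x w) (hq : q.IsPath) (hu : u ∈ q.support) (hux : u ≠ x) (huw : u ≠ w) :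
    2 ≤ H.degree u := by
  set q1 := q.takeUntil u hu with hq1def
  set q2 := q.dropUntil u hu with hq2def
  have hspec : q1.append q2 = q := q.take_spec hu
  have hq1 : q1.IsPath := hq.takeUntil hu
  have hq2 : q2.IsPath := hq.dropUntil hu
  obtain ⟨n1, hadj1, r1, hr1⟩ := SimpleGraph.Walk.exists_eq_cons_of_ne hux q1.reverse
  obtain ⟨n2, hadj2, r2, hr2⟩ := SimpleGraph.Walk.exists_eq_cons_of_ne huw q2
  have hn1mem : n1 ∈ q1.support := by
    have : n1 ∈ q1.reverse.support := by
      rw [hr1, SimpleGraph.Walk.support_cons]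
      exact List.mem_cons_of_mem _ r1.start_mem_support
    rwa [SimpleGraph.Walk.support_reverse, List.mem_reverse] at this
  have hn2mem : n2 ∈ q2.support.tail := by
    rw [hr2, SimpleGraph.Walk.support_cons, List.tail_cons]
    exact r2.start_mem_support
  have hne : n1 ≠ n2 := by
    intro h
    have hnodup := hq.support_nodup
    rw [← hspec, SimpleGraph.Walk.support_append] at hnodup
    exact (List.disjoint_of_nodup_append hnodup) hn1mem (h ▸ hn2mem)
  have hsub : ({n1, n2} : Finset V) ⊆ H.neighborFinset u := by
    intro z hz
    rw [Finset.mem_insert, Finset.mem_singleton] at hz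
    rw [SimpleGraph.mem_neighborFinset]
    rcases hz with rfl | rfl
    · exact hadj1
    · exact hadj2
  calc 2 = ({n1, n2} : Finset V).card := by rw [Finset.card_insert_of_notMem (by simpa using hne), Finset.card_singleton]
    _ ≤ H.degree u := Finset.card_le_card hsub

/-- A connected component of a max-degree-2 graph cannot contain three distinct
degree-≤1 vertices. -/
lemma no_three {H : SimpleGraph V} [DecidableRel H.Adj] {x u w : V}
    (hdeg : ∀ v, H.degree v ≤ 2) (hx : H.degree x ≤ 1) (hu : H.degree u ≤ 1)
    (hw : H.degree w ≤ 1) (hxu : x ≠ u) (hxw : x ≠ w) (huw : u ≠ w)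
    (hru : H.Reachable x u) (hrw : H.Reachable x w) : False := by
  obtain ⟨p0⟩ := hru
  obtain ⟨q0⟩ := hrw
  set p := p0.toPath
  set q := q0.toPath
  rcases pathA p.1.length H inferInstance x u w hdeg hx p.1 p.2 q.1 q.2 rfl with h | h
  · have := pathB q.1 q.2 h hxu.symm huw
    omega
  · have := pathB p.1 p.2 h hxw.symm huw.symm
    omega





/-- A proper edge colouring presented as a symmetric function on pairs of vertices. -/
def Proper (G : SimpleGraph V) (c : V → V → Fin k) : Prop :=
  (∀ v w, c v w = c w v) ∧ ∀ ⦃v a b⦄, G.Adj v a → G.Adj v b → c v a = c v b → a = b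

/-- `γ` is not used on any edge at `v`. -/
def Free (G : SimpleGraph V) (c : V → V → Fin k) (v : V) (γ : Fin k) : Prop :=
  ∀ u, G.Adj v u → c v u ≠ γ

lemma exists_free {G : SimpleGraph V} [DecidableRel G.Adj] (c : V → V → Fin k)
    {v : V} (h : G.degree v < k) : ∃ γ, Free G c v γ := by
  by_contra hcon
  push_neg at hcon
  have hsurj : ∀ γ : Fin k, γ ∈ (G.neighborFinset v).image (c v) := by
    intro γ
    obtain ⟨u, hu, hcu⟩ := by simpa [Free] using hcon γ
    exact Finset.mem_image.mpr ⟨u, (SimpleGraph.mem_neighborFinset _ _ _).mpr hu, hcu⟩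
  have hsub : (Finset.univ : Finset (Fin k)) ⊆ (G.neighborFinset v).image (c v) :=
    fun γ _ => hsurj γ
  have h1 := Finset.card_le_card hsub
  rw [Finset.card_univ, Fintype.card_fin] at h1
  have h2 := Finset.card_image_le (s := G.neighborFinset v) (f := c v)
  rw [SimpleGraph.degree] at h
  omega

section Swap

variable (G : SimpleGraph V) (c : V → V → Fin k) (α β : Fin k)

/-- Subgraph of edges coloured `α` or `β`. -/
def chainGraph : SimpleGraph V :=
  SimpleGraph.fromRel (fun a b => G.Adj a b ∧ (c a b = α ∨ c a b = β))

variable {G c α β}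

lemma chainGraph_adj (hc : Proper G c) {a b : V} :
    (chainGraph G c α β).Adj a b ↔ G.Adj a b ∧ (c a b = α ∨ c a b = β) := by
  rw [chainGraph, SimpleGraph.fromRel_adj]
  constructor
  · rintro ⟨hne, h | h⟩
    · exact h
    · exact ⟨h.1.symm, by rw [hc.1 a b]; exact h.2⟩
  · intro h
    exact ⟨h.1.ne, Or.inl h⟩

/-- The chain graph has maximum degree 2. -/
lemma chainGraph_degree_le_two (hc : Proper G c) [DecidableRel (chainGraph G c α β).Adj]
    (v : V) : (chainGraph G c α β).degree v ≤ 2 := by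
  classical
  have hsub : (chainGraph G c α β).neighborFinset v ⊆
      (Finset.univ.filter (fun u => G.Adj v u ∧ c v u = α)) ∪
      (Finset.univ.filter (fun u => G.Adj v u ∧ c v u = β)) := by
    intro u hu
    rw [SimpleGraph.mem_neighborFinset, chainGraph_adj hc] at hu
    rcases hu.2 with h | h
    · exact Finset.mem_union_left _ (by simp [hu.1, h])
    · exact Finset.mem_union_right _ (by simp [hu.1, h])
  have hcard : ∀ γ : Fin k, (Finset.univ.filter (fun u => G.Adj v u ∧ c v u = γ)).card ≤ 1 := by
    intro γ
    rw [Finset.card_le_one]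
    intro a ha b hb
    simp only [Finset.mem_filter] at ha hb
    exact hc.2 ha.2.1 hb.2.1 (ha.2.2.trans hb.2.2.symm)
  calc (chainGraph G c α β).degree v ≤ _ := Finset.card_le_card hsub
    _ ≤ _ := Finset.card_union_le _ _
    _ ≤ 2 := by have := hcard α; have := hcard β; omega

/-- A vertex missing one of the two colours has chain-degree at most 1. -/
lemma chainGraph_degree_le_one (hc : Proper G c) [DecidableRel (chainGraph G c α β).Adj]
    {v : V} (hv : Free G c v α ∨ Free G c v β) :
    (chainGraph G c α β).degree v ≤ 1 := by
  classical
  rcases hv with hv | hv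
  · have hsub : (chainGraph G c α β).neighborFinset v ⊆
        (Finset.univ.filter (fun u => G.Adj v u ∧ c v u = β)) := by
      intro u hu
      rw [SimpleGraph.mem_neighborFinset, chainGraph_adj hc] at hu
      rcases hu.2 with h | h
      · exact absurd h (hv u hu.1)
      · simp [hu.1, h]
    refine le_trans (Finset.card_le_card hsub) ?_
    rw [Finset.card_le_one]
    intro a ha b hb
    simp only [Finset.mem_filter] at ha hb
    exact hc.2 ha.2.1 hb.2.1 (ha.2.2.trans hb.2.2.symm)
  · have hsub : (chainGraph G c α β).neighborFinset v ⊆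
        (Finset.univ.filter (fun u => G.Adj v u ∧ c v u = α)) := by
      intro u hu
      rw [SimpleGraph.mem_neighborFinset, chainGraph_adj hc] at hu
      rcases hu.2 with h | h
      · simp [hu.1, h]
      · exact absurd h (hv u hu.1)
    refine le_trans (Finset.card_le_card hsub) ?_
    rw [Finset.card_le_one]
    intro a ha b hb
    simp only [Finset.mem_filter] at ha hb
    exact hc.2 ha.2.1 hb.2.1 (ha.2.2.trans hb.2.2.symm)

open scoped Classical in
/-- Swap colours `α` and `β` on the chain component of `z`. -/
noncomputable def swapped (G : SimpleGraph V) (c : V → V → Fin k) (α β : Fin k) (z : V) :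
    V → V → Fin k :=
  fun v w =>
    if (chainGraph G c α β).Reachable z v ∧ (chainGraph G c α β).Adj v w
    then Equiv.swap α β (c v w) else c v w

lemma swapped_eq_of_mem (hc : Proper G c) {z v : V}
    (hv : (chainGraph G c α β).Reachable z v) (w : V) (hw : G.Adj v w) :
    swapped G c α β z v w = Equiv.swap α β (c v w) := by
  simp only [swapped]
  by_cases h : (chainGraph G c α β).Adj v w
  · rw [if_pos ⟨hv, h⟩]
  · rw [if_neg (fun hcon => h hcon.2)]
    rw [chainGraph_adj hc] at h
    push_neg at h
    have := h hw
    rw [Equiv.swap_apply_of_ne_of_ne this.1 this.2]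

lemma swapped_eq_of_not_mem {z v : V}
    (hv : ¬ (chainGraph G c α β).Reachable z v) (w : V) :
    swapped G c α β z v w = c v w := by
  simp only [swapped]
  rw [if_neg (fun hcon => hv hcon.1)]

lemma swapped_proper (hc : Proper G c) (z : V) : Proper G (swapped G c α β z) := by
  classical
  constructor
  · intro v w
    simp only [swapped]
    by_cases h : (chainGraph G c α β).Reachable z v ∧ (chainGraph G c α β).Adj v w
    · rw [if_pos h, if_pos ⟨h.1.trans h.2.reachable, h.2.symm⟩, hc.1 v w]
    · rw [if_neg h, if_neg ?_, hc.1 v w]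
      rintro ⟨h1, h2⟩
      exact h ⟨h1.trans h2.reachable, h2.symm⟩
  · intro v a b ha hb heq
    by_cases h : (chainGraph G c α β).Reachable z v
    · rw [swapped_eq_of_mem hc h a ha, swapped_eq_of_mem hc h b hb] at heq
      exact hc.2 ha hb ((Equiv.swap α β).injective heq)
    · rw [swapped_eq_of_not_mem h, swapped_eq_of_not_mem h] at heq
      exact hc.2 ha hb heq

lemma swapped_free_of_not_mem {z v : V}
    (hv : ¬ (chainGraph G c α β).Reachable z v) {γ : Fin k}
    (h : Free G c v γ) : Free G (swapped G c α β z) v γ := by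
  intro u hu
  rw [swapped_eq_of_not_mem hv]
  exact h u hu

lemma swapped_free_of_mem (hc : Proper G c) {z v : V}
    (hv : (chainGraph G c α β).Reachable z v) {γ : Fin k}
    (h : Free G c v (Equiv.swap α β γ)) : Free G (swapped G c α β z) v γ := by
  intro u hu
  rw [swapped_eq_of_mem hc hv u hu]
  intro hcon
  exact h u hu (by rw [← hcon, Equiv.swap_apply_self])

end Swap



lemma sup_edge_adj {G : SimpleGraph V} {x y0 : V} (hx0 : x ≠ y0) (v u : V) :
    (G ⊔ SimpleGraph.edge x y0).Adj v u ↔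
      G.Adj v u ∨ (v = x ∧ u = y0) ∨ (v = y0 ∧ u = x) := by
  rw [SimpleGraph.sup_adj, SimpleGraph.edge_adj]
  constructor
  · rintro (h | ⟨h, -⟩)
    · exact Or.inl h
    · exact Or.inr h
  · rintro (h | h)
    · exact Or.inl h
    · refine Or.inr ⟨h, ?_⟩
      rcases h with ⟨rfl, rfl⟩ | ⟨rfl, rfl⟩
      · exact hx0
      · exact hx0.symm

section Rotate

variable (c : V → V → Fin k) (x : V) (m : ℕ) (y : ℕ → V) (δ : Fin k)

open scoped Classical in
/-- New colour of the edge from `x` to `w` after rotating the fan and colouring its tip. -/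
noncomputable def rotg : V → Fin k := fun w =>
  if h : ∃ i, i ≤ m ∧ y i = w then
    (if Nat.find h < m then c x (y (Nat.find h + 1)) else δ)
  else c x w

/-- The rotated colouring. -/
noncomputable def rotc : V → V → Fin k := fun v w =>
  if v = x then rotg c x m y δ w else if w = x then rotg c x m y δ v else c v w

variable {c x m y δ}

lemma rotg_eq_idx (hyinj : ∀ i j, i ≤ m → j ≤ m → y i = y j → i = j) {i : ℕ} (hi : i ≤ m) :
    rotg c x m y δ (y i) = if i < m then c x (y (i + 1)) else δ := by
  classical
  simp only [rotg]
  have h : ∃ j, j ≤ m ∧ y j = y i := ⟨i, hi, rfl⟩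
  rw [dif_pos h]
  have hspec := Nat.find_spec h
  have : Nat.find h = i := hyinj _ _ hspec.1 hi hspec.2
  rw [this]

lemma rotg_eq_self {w : V} (h : ∀ i, i ≤ m → y i ≠ w) :
    rotg c x m y δ w = c x w := by
  classical
  simp only [rotg]
  rw [dif_neg]
  rintro ⟨i, hi, hyi⟩
  exact h i hi hyi

lemma rotc_symm (hc : ∀ v w, c v w = c w v) (v w : V) :
    rotc c x m y δ v w = rotc c x m y δ w v := by
  simp only [rotc]
  by_cases hv : v = x <;> by_cases hw : w = x <;> simp [hv, hw, hc v w]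

/-- The key rotation lemma: shifting the colours along a fan and colouring its tip
with a colour free at both ends yields a proper colouring of the augmented graph. -/
lemma rotate {G : SimpleGraph V} (hc : Proper G c)
    (hyinj : ∀ i j, i ≤ m → j ≤ m → y i = y j → i = j)
    (hyx : ∀ i, i ≤ m → y i ≠ x)
    (hadj : ∀ i, i < m → G.Adj x (y (i + 1)))
    (hfan : ∀ i, i < m → Free G c (y i) (c x (y (i + 1))))
    (hδx : Free G c x δ)
    (hδm : Free G c (y m) δ)
    (hxy0 : ¬ G.Adj x (y 0))
    (hx0 : x ≠ y 0) :
    Proper (G ⊔ SimpleGraph.edge x (y 0)) (rotc c x m y δ) := by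
  classical
  set g := rotg c x m y δ with hg
  -- range facts
  have hrange : ∀ w, (∃ i, i ≤ m ∧ y i = w) ∨ (∀ i, i ≤ m → y i ≠ w) := by
    intro w
    by_cases h : ∃ i, i ≤ m ∧ y i = w
    · exact Or.inl h
    · push_neg at h
      exact Or.inr h
  -- injectivity of g on x-neighbours together with y 0
  have hgx : ∀ a b, (G.Adj x a ∨ a = y 0) → (G.Adj x b ∨ b = y 0) → g a = g b → a = b := by
    have key : ∀ w, (G.Adj x w ∨ w = y 0) → (∀ i, i ≤ m → y i ≠ w) → G.Adj x w := by
      intro w hw hnr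
      rcases hw with hw | rfl
      · exact hw
      · exact absurd rfl (hnr 0 (Nat.zero_le m))
    intro a b ha hb heq
    rcases hrange a with ⟨i, hi, rfl⟩ | hna
    · rcases hrange b with ⟨j, hj, rfl⟩ | hnb
      · rw [hg, rotg_eq_idx hyinj hi, rotg_eq_idx hyinj hj] at heq
        by_cases him : i < m <;> by_cases hjm : j < m
        · rw [if_pos him, if_pos hjm] at heq
          have h1 := hc.2 (hadj i him) (hadj j hjm) heq
          have h2 := hyinj _ _ (by omega) (by omega) h1
          exact congrArg y (by omega)
        · rw [if_pos him, if_neg hjm] at heq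
          exact absurd heq (hδx _ (hadj i him))
        · rw [if_neg him, if_pos hjm] at heq
          exact absurd heq.symm (hδx _ (hadj j hjm))
        · have him' : i = m := by omega
          have hjm' : j = m := by omega
          rw [him', hjm']
      · have hb' : G.Adj x b := key b hb hnb
        rw [hg, rotg_eq_idx hyinj hi, rotg_eq_self hnb] at heq
        by_cases him : i < m
        · rw [if_pos him] at heq
          have := hc.2 (hadj i him) hb' heq
          exact absurd this (hnb (i + 1) (by omega))
        · rw [if_neg him] at heq
          exact absurd heq.symm (hδx _ hb')
    · rcases hrange b with ⟨j, hj, rfl⟩ | hnb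
      · have ha' : G.Adj x a := key a ha hna
        rw [hg, rotg_eq_idx hyinj hj, rotg_eq_self hna] at heq
        by_cases hjm : j < m
        · rw [if_pos hjm] at heq
          have := hc.2 ha' (hadj j hjm) heq
          exact absurd this.symm (hna (j + 1) (by omega))
        · rw [if_neg hjm] at heq
          exact absurd heq (hδx _ ha')
      · have ha' : G.Adj x a := key a ha hna
        have hb' : G.Adj x b := key b hb hnb
        rw [hg, rotg_eq_self hna, rotg_eq_self hnb] at heq
        exact hc.2 ha' hb' heq
  -- the middle case: contradiction
  have hmid : ∀ v b, v ≠ x → b ≠ x → (G ⊔ SimpleGraph.edge x (y 0)).Adj v x →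
      G.Adj v b → g v = c v b → False := by
    intro v b hvx hbx hvadj hvb heq
    rcases hrange v with ⟨i, hi, rfl⟩ | hnv
    · rw [hg, rotg_eq_idx hyinj hi] at heq
      by_cases him : i < m
      · rw [if_pos him] at heq
        exact hfan i him b hvb heq.symm
      · rw [if_neg him] at heq
        have : i = m := by omega
        subst this
        exact hδm b hvb heq.symm
    · have hvadj' : G.Adj v x := by
        rw [sup_edge_adj hx0] at hvadj
        rcases hvadj with h | ⟨h1, -⟩ | ⟨h1, -⟩
        · exact h
        · exact absurd h1 hvx
        · exact absurd h1.symm (hnv 0 (Nat.zero_le m))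
      rw [hg, rotg_eq_self hnv] at heq
      have : c v x = c v b := by rw [hc.1 x v] at heq; exact heq
      exact hbx (hc.2 hvadj' hvb this).symm
  constructor
  · exact rotc_symm hc.1
  · intro v a b hva hvb heq
    by_cases hvx : v = x
    · have h2a : rotc c x m y δ v a = g a := by simp only [rotc]; rw [if_pos hvx]
      have h2b : rotc c x m y δ v b = g b := by simp only [rotc]; rw [if_pos hvx]
      rw [h2a, h2b] at heq
      rw [hvx] at hva hvb
      have ha : G.Adj x a ∨ a = y 0 := by
        rw [sup_edge_adj hx0] at hva
        rcases hva with h | ⟨-, h⟩ | ⟨h, -⟩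
        · exact Or.inl h
        · exact Or.inr h
        · exact absurd h hx0
      have hb : G.Adj x b ∨ b = y 0 := by
        rw [sup_edge_adj hx0] at hvb
        rcases hvb with h | ⟨-, h⟩ | ⟨h, -⟩
        · exact Or.inl h
        · exact Or.inr h
        · exact absurd h hx0
      exact hgx a b ha hb heq
    · by_cases hax : a = x <;> by_cases hbx : b = x
      · rw [hax, hbx]
      · have h2a : rotc c x m y δ v a = g v := by simp only [rotc]; rw [if_neg hvx, if_pos hax]
        have h2b : rotc c x m y δ v b = c v b := by simp only [rotc]; rw [if_neg hvx, if_neg hbx]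
        rw [h2a, h2b] at heq
        rw [hax] at hva
        have hvb' : G.Adj v b := by
          rw [sup_edge_adj hx0] at hvb
          rcases hvb with h | ⟨h, -⟩ | ⟨-, h⟩
          · exact h
          · exact absurd h hvx
          · exact absurd h hbx
        exact absurd heq (fun h => hmid v b hvx hbx hva hvb' h)
      · have h2a : rotc c x m y δ v a = c v a := by simp only [rotc]; rw [if_neg hvx, if_neg hax]
        have h2b : rotc c x m y δ v b = g v := by simp only [rotc]; rw [if_neg hvx, if_pos hbx]
        rw [h2a, h2b] at heq
        rw [hbx] at hvb
        have hva' : G.Adj v a := by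
          rw [sup_edge_adj hx0] at hva
          rcases hva with h | ⟨h, -⟩ | ⟨-, h⟩
          · exact h
          · exact absurd h hvx
          · exact absurd h hax
        exact absurd heq.symm (fun h => hmid v a hvx hax hvb hva' h)
      · have h2a : rotc c x m y δ v a = c v a := by simp only [rotc]; rw [if_neg hvx, if_neg hax]
        have h2b : rotc c x m y δ v b = c v b := by simp only [rotc]; rw [if_neg hvx, if_neg hbx]
        rw [h2a, h2b] at heq
        have hva' : G.Adj v a := by
          rw [sup_edge_adj hx0] at hva
          rcases hva with h | ⟨h, -⟩ | ⟨-, h⟩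
          · exact h
          · exact absurd h hvx
          · exact absurd h hax
        have hvb' : G.Adj v b := by
          rw [sup_edge_adj hx0] at hvb
          rcases hvb with h | ⟨h, -⟩ | ⟨-, h⟩
          · exact h
          · exact absurd h hvx
          · exact absurd h hbx
        exact hc.2 hva' hvb' heq

end Rotate
section Extend

variable {G : SimpleGraph V} {c : V → V → Fin k}

/-- The key extension lemma: a proper colouring of `G` can be extended to
`G ⊔ edge x y0` when every vertex has degree `< k` in `G`. -/
lemma extend [DecidableRel G.Adj] (hc : Proper G c) {x y0 : V}
    (hxy0 : ¬ G.Adj x y0) (hx0 : x ≠ y0) (hdeg : ∀ v, G.degree v < k) :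
    ∃ c₂ : V → V → Fin k, Proper (G ⊔ SimpleGraph.edge x y0) c₂ := by
  classical
  -- fans based at x starting with y0
  set P : ℕ → Prop := fun n => ∃ y : ℕ → V, y 0 = y0 ∧
    (∀ i j, i ≤ n → j ≤ n → y i = y j → i = j) ∧
    (∀ i, i ≤ n → y i ≠ x) ∧
    (∀ i, i < n → G.Adj x (y (i + 1)) ∧ Free G c (y i) (c x (y (i + 1)))) with hP
  have h0 : P 0 := by
    refine ⟨fun _ => y0, rfl, fun i j hi hj _ => by omega, fun i _ => hx0.symm, fun i hi => by omega⟩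
  have hbound : ∀ n, P n → n ≤ Fintype.card V := by
    intro n hn
    obtain ⟨y, -, hyinj, -, -⟩ := hn
    have hinj : Function.Injective (fun i : Fin (n + 1) => y i.1) := by
      intro i j hij
      exact Fin.ext (hyinj i.1 j.1 (by omega) (by omega) hij)
    have := Fintype.card_le_of_injective _ hinj
    simp only [Fintype.card_fin] at this
    omega
  set N := Nat.findGreatest P (Fintype.card V) with hN
  have hPN : P N := Nat.findGreatest_spec (hbound 0 h0) h0
  have hmax : ∀ n, P n → n ≤ N := fun n hn => Nat.le_findGreatest (hbound n hn) hn
  obtain ⟨y, hy0, hyinj, hyx, hfan⟩ := hPN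
  obtain ⟨β, hβ⟩ := exists_free c (hdeg (y N))
  have hxy0' : ¬ G.Adj x (y 0) := by rw [hy0]; exact hxy0
  have hx0' : x ≠ y 0 := by rw [hy0]; exact hx0
  by_cases hβx : Free G c x β
  · refine ⟨rotc c x N y β, ?_⟩
    rw [← hy0]
    exact rotate hc hyinj hyx (fun i hi => (hfan i hi).1) (fun i hi => (hfan i hi).2)
      hβx hβ hxy0' hx0'
  · -- β is used at x, say on the edge to z, and z must already be in the fan
    have hz : ∃ z, G.Adj x z ∧ c x z = β := by
      by_contra hcon
      push_neg at hcon
      exact hβx (fun u hu => hcon u hu)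
    obtain ⟨z, hzadj, hzβ⟩ := hz
    have hzfan : ∃ j, j ≤ N ∧ 0 < j ∧ z = y j := by
      by_contra hcon
      push_neg at hcon
      have hznot : ∀ j, j ≤ N → z ≠ y j := by
        intro j hj
        rcases Nat.eq_zero_or_pos j with rfl | hjpos
        · rw [hy0]
          intro h
          rw [h] at hzadj
          exact hxy0 hzadj
        · exact hcon j hj hjpos
      have hPN1 : P (N + 1) := by
        set y' : ℕ → V := fun i => if i ≤ N then y i else z with hy'
        have hy'le : ∀ i, i ≤ N → y' i = y i := fun i hi => by simp [hy', hi]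
        have hy'gt : ∀ i, ¬ i ≤ N → y' i = z := fun i hi => by simp [hy', hi]
        refine ⟨y', ?_, ?_, ?_, ?_⟩
        · rw [hy'le 0 (Nat.zero_le N), hy0]
        · intro i j hi hj hij
          by_cases hi': i ≤ N <;> by_cases hj' : j ≤ N
          · rw [hy'le i hi', hy'le j hj'] at hij
            exact hyinj i j hi' hj' hij
          · rw [hy'le i hi', hy'gt j hj'] at hij
            exact absurd hij.symm (hznot i hi')
          · rw [hy'gt i hi', hy'le j hj'] at hij
            exact absurd hij (hznot j hj')
          · omega
        · intro i hi
          by_cases hi' : i ≤ N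
          · rw [hy'le i hi']
            exact hyx i hi'
          · rw [hy'gt i hi']
            exact hzadj.ne'
        · intro i hi
          by_cases hi' : i < N
          · rw [hy'le (i + 1) (by omega), hy'le i (by omega)]
            exact hfan i hi'
          · have hiN : i = N := by omega
            subst hiN
            rw [hy'gt (N + 1) (by omega), hy'le N (le_refl N)]
            refine ⟨hzadj, ?_⟩
            rw [hzβ]
            exact hβ
      have := hmax (N + 1) hPN1
      omega
    obtain ⟨j, hjN, hjpos, hzj⟩ := hzfan
    -- the colour β is also free at y (j-1)
    have hj1 : j - 1 + 1 = j := by omega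
    have hfβ : Free G c (y (j - 1)) β := by
      have := (hfan (j - 1) (by omega)).2
      rw [hj1, ← hzj, hzβ] at this
      exact this
    obtain ⟨α, hα⟩ := exists_free c (hdeg x)
    have hαβ : α ≠ β := fun h => hβx (h ▸ hα)
    set H := chainGraph G c α β with hH
    letI : DecidableRel H.Adj := Classical.decRel _
    have hdH : ∀ v, H.degree v ≤ 2 := fun v => chainGraph_degree_le_two hc v
    have hdx : H.degree x ≤ 1 := chainGraph_degree_le_one hc (Or.inl hα)
    have hdyj : H.degree (y (j - 1)) ≤ 1 := chainGraph_degree_le_one hc (Or.inr hfβ)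
    have hdyN : H.degree (y N) ≤ 1 := chainGraph_degree_le_one hc (Or.inr hβ)
    -- the colour of the edge x - y(i+1) is never α, and is β only for i = j-1
    have hγα : ∀ i, i < N → c x (y (i + 1)) ≠ α := fun i hi => hα _ (hfan i hi).1
    have hγβ : ∀ i, i < N → i ≠ j - 1 → c x (y (i + 1)) ≠ β := by
      intro i hi hij h
      rw [← hzβ] at h
      have := hc.2 (hfan i hi).1 hzadj h
      rw [hzj] at this
      have := hyinj _ _ (by omega) hjN this
      omega
    by_cases hreach : H.Reachable x (y (j - 1))
    · -- swap the chain at y N, rotate the full fan, colour the tip α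
      have hreachN : ¬ H.Reachable x (y N) := by
        intro hcon
        refine no_three hdH hdx hdyj hdyN (fun h => hyx (j-1) (by omega) h.symm)
          (fun h => hyx N (le_refl N) h.symm) ?_ hreach hcon
        intro h
        have := hyinj _ _ (by omega) (le_refl N) h
        omega
      have hxK : ¬ H.Reachable (y N) x := fun h => hreachN h.symm
      have hyjK : ¬ H.Reachable (y N) (y (j - 1)) := fun h => hreachN (hreach.trans h.symm)
      set c₁ := swapped G c α β (y N) with hc₁
      have hc₁p : Proper G c₁ := swapped_proper hc (y N)
      have hcx : ∀ w, c₁ x w = c x w := fun w => swapped_eq_of_not_mem hxK w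
      refine ⟨rotc c₁ x N y α, ?_⟩
      rw [← hy0]
      refine rotate hc₁p hyinj hyx (fun i hi => (hfan i hi).1) ?_ ?_ ?_ hxy0' hx0'
      · intro i hi
        rw [hcx]
        by_cases hij : i = j - 1
        · subst hij
          have : c x (y (j - 1 + 1)) = β := by rw [hj1, ← hzj, hzβ]
          rw [this]
          exact swapped_free_of_not_mem hyjK hfβ
        · by_cases hyiK : H.Reachable (y N) (y i)
          · refine swapped_free_of_mem hc hyiK ?_
            rw [Equiv.swap_apply_of_ne_of_ne (hγα i hi) (hγβ i hi hij)]
            exact (hfan i hi).2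
          · exact swapped_free_of_not_mem hyiK (hfan i hi).2
      · refine fun u hu => ?_
        rw [hcx]
        exact hα u hu
      · refine swapped_free_of_mem hc (SimpleGraph.Reachable.refl _) ?_
        rw [Equiv.swap_apply_left]
        exact hβ
    · -- swap the chain at y (j-1), rotate the fan up to j-1, colour the tip α
      have hxK : ¬ H.Reachable (y (j - 1)) x := fun h => hreach h.symm
      set c₁ := swapped G c α β (y (j - 1)) with hc₁
      have hc₁p : Proper G c₁ := swapped_proper hc (y (j - 1))
      have hcx : ∀ w, c₁ x w = c x w := fun w => swapped_eq_of_not_mem hxK w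
      refine ⟨rotc c₁ x (j - 1) y α, ?_⟩
      rw [← hy0]
      refine rotate hc₁p (fun i l hi hl => hyinj i l (by omega) (by omega))
        (fun i hi => hyx i (by omega)) (fun i hi => (hfan i (by omega)).1) ?_ ?_ ?_ hxy0' hx0'
      · intro i hi
        rw [hcx]
        by_cases hyiK : H.Reachable (y (j - 1)) (y i)
        · refine swapped_free_of_mem hc hyiK ?_
          rw [Equiv.swap_apply_of_ne_of_ne (hγα i (by omega)) (hγβ i (by omega) (by omega))]
          exact (hfan i (by omega)).2
        · exact swapped_free_of_not_mem hyiK (hfan i (by omega)).2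
      · refine fun u hu => ?_
        rw [hcx]
        exact hα u hu
      · refine swapped_free_of_mem hc (SimpleGraph.Reachable.refl _) ?_
        rw [Equiv.swap_apply_left]
        exact hfβ

end Extend

lemma base_case (G : SimpleGraph V) (hno : ∀ v w, ¬ G.Adj v w)
    (hk : Nonempty V → 0 < k) : ∃ c : V → V → Fin k, Proper G c := by
  by_cases hV : Nonempty V
  · exact ⟨fun _ _ => ⟨0, hk hV⟩, fun v w => rfl, fun v a b ha => absurd ha (hno _ _)⟩
  · haveI := not_nonempty_iff.mp hV
    exact ⟨fun v => isEmptyElim v, fun v => isEmptyElim v, fun v => isEmptyElim v⟩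

lemma main : ∀ (n : ℕ) (G : SimpleGraph V) [DecidableRel G.Adj],
    G.edgeFinset.card ≤ n → (∀ v, G.degree v < k) →
    ∃ c : V → V → Fin k, Proper G c := by
  intro n
  induction n with
  | zero =>
    intro G _ hcard hdeg
    refine base_case G ?_ (fun hV => lt_of_le_of_lt (Nat.zero_le _) (hdeg hV.some))
    intro v w hvw
    have : s(v, w) ∈ G.edgeFinset := by
      rw [SimpleGraph.mem_edgeFinset]
      exact hvw
    have hpos : 0 < G.edgeFinset.card := Finset.card_pos.mpr ⟨_, this⟩
    omega
  | succ n ih =>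
    intro G _ hcard hdeg
    by_cases hE : ∃ e, e ∈ G.edgeFinset
    · obtain ⟨e, he⟩ := hE
      obtain ⟨⟨x, y0⟩, rfl⟩ := e.exists_rep
      rw [SimpleGraph.mem_edgeFinset, SimpleGraph.mem_edgeSet] at he
      have hx0 : x ≠ y0 := he.ne
      set G' := G.deleteEdges {s(x, y0)} with hG'
      letI : DecidableRel G'.Adj := fun a b =>
        decidable_of_iff (G.Adj a b ∧ ¬ s(a, b) = s(x, y0)) (by simp [hG'])
      have hsub : G'.edgeFinset ⊆ G.edgeFinset := by
        intro f hf
        rw [SimpleGraph.mem_edgeFinset] at hf ⊢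
        rw [hG', SimpleGraph.edgeSet_deleteEdges] at hf
        exact hf.1
      have hnotmem : s(x, y0) ∉ G'.edgeFinset := by
        rw [SimpleGraph.mem_edgeFinset, hG', SimpleGraph.edgeSet_deleteEdges]
        intro h
        exact h.2 rfl
      have hmem : s(x, y0) ∈ G.edgeFinset := by
        rw [SimpleGraph.mem_edgeFinset, SimpleGraph.mem_edgeSet]
        exact he
      have hcard' : G'.edgeFinset.card ≤ n := by
        have : G'.edgeFinset ⊂ G.edgeFinset := ⟨hsub, fun h => hnotmem (h hmem)⟩
        have := Finset.card_lt_card this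
        omega
      have hdeg' : ∀ v, G'.degree v < k := fun v =>
        lt_of_le_of_lt (degree_le_of_le (SimpleGraph.deleteEdges_le _) v) (hdeg v)
      obtain ⟨c', hc'⟩ := ih G' hcard' hdeg'
      have hxy0' : ¬ G'.Adj x y0 := by
        rw [hG', SimpleGraph.deleteEdges_adj]
        intro h
        exact h.2 rfl
      obtain ⟨c₂, hc₂⟩ := extend hc' hxy0' hx0 hdeg'
      have hGeq : G' ⊔ SimpleGraph.edge x y0 = G := by
        ext a b
        rw [sup_edge_adj hx0, hG', SimpleGraph.deleteEdges_adj]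
        constructor
        · rintro (⟨h, -⟩ | ⟨rfl, rfl⟩ | ⟨rfl, rfl⟩)
          · exact h
          · exact he
          · exact he.symm
        · intro h
          by_cases hab : s(a, b) = s(x, y0)
          · rw [Sym2.eq_iff] at hab
            rcases hab with ⟨rfl, rfl⟩ | ⟨rfl, rfl⟩
            · exact Or.inr (Or.inl ⟨rfl, rfl⟩)
            · exact Or.inr (Or.inr ⟨rfl, rfl⟩)
          · exact Or.inl ⟨h, by simpa using hab⟩
      rw [hGeq] at hc₂
      exact ⟨c₂, hc₂⟩
    · push_neg at hE
      refine base_case G ?_ (fun hV => lt_of_le_of_lt (Nat.zero_le _) (hdeg hV.some))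
      intro v w hvw
      exact hE s(v, w) (by rw [SimpleGraph.mem_edgeFinset]; exact hvw)

end VizingProof

/-- **Vizing's theorem.** For every finite simple graph `G`, the chromatic index of `G`
(the chromatic number of its line graph) is at most `Δ(G) + 1`. -/
theorem vizing_chromatic_index_le {V : Type*} [Fintype V] (G : SimpleGraph V)
    [DecidableRel G.Adj] :
    (G.lineGraph).chromaticNumber ≤ (G.maxDegree : ℕ∞) + 1 := by
  classical
  obtain ⟨c, hc⟩ := VizingProof.main (k := G.maxDegree + 1) G.edgeFinset.card G le_rfl
    (fun v => Nat.lt_succ_of_le (G.degree_le_maxDegree v))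
  have hcol : (G.lineGraph).Colorable (G.maxDegree + 1) := by
    refine ⟨SimpleGraph.Coloring.mk
      (fun e => Sym2.lift ⟨fun a b => c a b, fun a b => hc.1 a b⟩ e.1) ?_⟩
    intro e₁ e₂ hadj
    rw [SimpleGraph.lineGraph_adj_iff_exists] at hadj
    obtain ⟨hne, v, hv1, hv2⟩ := hadj
    obtain ⟨a, ha⟩ := Sym2.mem_iff_exists.mp hv1
    obtain ⟨b, hb⟩ := Sym2.mem_iff_exists.mp hv2
    have hadj_a : G.Adj v a := by
      have := e₁.2
      rw [ha] at this
      exact this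
    have hadj_b : G.Adj v b := by
      have := e₂.2
      rw [hb] at this
      exact this
    have hab : a ≠ b := by
      intro h
      apply hne
      apply Subtype.ext
      rw [ha, hb, h]
    rw [ha, hb]
    simp only [Sym2.lift_mk]
    exact fun h => hab (hc.2 hadj_a hadj_b h)
  calc (G.lineGraph).chromaticNumber ≤ ((G.maxDegree + 1 : ℕ) : ℕ∞) :=
      hcol.chromaticNumber_le
    _ = (G.maxDegree : ℕ∞) + 1 := by push_cast; rfl
end

section
/- For every even natural number n ≥ 2, the chromatic index of the complete graph K_n on n vertices equals n − 1. -/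
section aux

variable {m : ℕ}

private lemma zmod_cast_inj [NeZero m] {x y : ℕ} (hx : x < m) (hy : y < m)
    (h : (x : ZMod m) = (y : ZMod m)) : x = y := by
  have := congrArg ZMod.val h
  rwa [ZMod.val_cast_of_lt hx, ZMod.val_cast_of_lt hy] at this

private lemma two_unit [NeZero m] (hm : Odd m) : IsUnit (2 : ZMod m) := by
  have : IsUnit ((2 : ℕ) : ZMod m) :=
    (ZMod.isUnit_iff_coprime 2 m).mpr (hm.coprime_two_left)
  simpa using this

end aux

/-- For every even `n ≥ 2`, the chromatic index of the complete graph `K_n`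
(the chromatic number of its line graph) equals `n - 1`. -/
theorem chromatic_index_complete_even (n : ℕ) (hn : 2 ≤ n) (he : Even n) :
    ((⊤ : SimpleGraph (Fin n)).lineGraph).chromaticNumber = ((n - 1 : ℕ) : ℕ∞) := by
  set m : ℕ := n - 1 with hm
  have hm1 : 1 ≤ m := by omega
  haveI : NeZero m := ⟨by omega⟩
  have hmodd : Odd m := by
    rcases he with ⟨k, hk⟩
    exact ⟨k - 1, by omega⟩
  have h2 : IsUnit (2 : ZMod m) := two_unit hmodd
  set G : SimpleGraph (Fin n) := ⊤ with hG
  -- the symmetric color function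
  set g : Fin n → Fin n → ZMod m := fun i j =>
    if i.val = m then 2 * (j.val : ZMod m)
    else if j.val = m then 2 * (i.val : ZMod m)
    else (i.val : ZMod m) + (j.val : ZMod m) with hg
  have gsymm : ∀ i j, g i j = g j i := by
    intro i j
    by_cases hi : i.val = m <;> by_cases hj : j.val = m <;>
      simp [hg, hi, hj, add_comm]
  -- key: colors of two edges sharing v differ
  have key : ∀ v a b : Fin n, a ≠ v → b ≠ v → a ≠ b → g v a ≠ g v b := by
    intro v a b hav hbv hab h
    have hvlt : v.val < n := v.isLt
    have hav' : a.val ≠ v.val := fun h' => hav (Fin.ext h')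
    have hbv' : b.val ≠ v.val := fun h' => hbv (Fin.ext h')
    have hab' : a.val ≠ b.val := fun h' => hab (Fin.ext h')
    by_cases hv : v.val = m
    · -- a, b < m
      have ha : a.val < m := by omega
      have hb : b.val < m := by omega
      simp only [hg, hv, if_pos] at h
      exact hab' (zmod_cast_inj ha hb (h2.mul_left_cancel h))
    · have hvm : v.val < m := by omega
      by_cases ha : a.val = m
      · have hb : b.val ≠ m := by omega
        have hblt : b.val < m := by omega
        simp only [hg, hv, ha, hb, if_true, if_false, if_neg] at h
        rw [two_mul] at h
        exact hbv' (zmod_cast_inj hblt hvm (by linear_combination -h))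
      · by_cases hb : b.val = m
        · simp only [hg, hv, ha, hb, if_true, if_false, if_neg] at h
          rw [two_mul] at h
          have halt : a.val < m := by omega
          exact hav' (zmod_cast_inj halt hvm (by linear_combination h))
        · have halt : a.val < m := by omega
          have hblt : b.val < m := by omega
          simp only [hg, hv, ha, hb, if_false, if_neg] at h
          exact hab' (zmod_cast_inj halt hblt (by linear_combination h))
  -- the coloring
  let C : G.lineGraph.Coloring (ZMod m) := by
    refine SimpleGraph.Coloring.mk
      (fun e => Sym2.lift ⟨g, gsymm⟩ e.val) ?_
    rintro ⟨e₁, he₁⟩ ⟨e₂, he₂⟩ hadj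
    rw [SimpleGraph.lineGraph_adj_iff_exists] at hadj
    obtain ⟨hne, v, hv1, hv2⟩ := hadj
    simp only [Subtype.mk.injEq, ne_eq] at hne ⊢
    obtain ⟨a, rfl⟩ := Sym2.mem_iff_exists.mp hv1
    obtain ⟨b, rfl⟩ := Sym2.mem_iff_exists.mp hv2
    have hav : a ≠ v := fun h => by
      rw [SimpleGraph.mem_edgeSet] at he₁; subst h; simp [hG] at he₁
    have hbv : b ≠ v := fun h => by
      rw [SimpleGraph.mem_edgeSet] at he₂; subst h; simp [hG] at he₂
    have hab : a ≠ b := fun h => hne (by rw [h])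
    simpa using key v a b hav hbv hab
  have hcard : Fintype.card (ZMod m) = m := ZMod.card m
  have upper : G.lineGraph.chromaticNumber ≤ (m : ℕ∞) := by
    have := C.colorable
    rw [hcard] at this
    exact this.chromaticNumber_le
  -- lower bound: clique of edges at vertex 0
  classical
  set z0 : Fin n := ⟨0, by omega⟩ with hz0
  have lower : (m : ℕ∞) ≤ G.lineGraph.chromaticNumber := by
    let ι : Fin m → G.edgeSet := fun i =>
      ⟨s(z0, (⟨i.val + 1, by omega⟩ : Fin n)), by
        rw [SimpleGraph.mem_edgeSet]
        simp only [hG, SimpleGraph.top_adj]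
        intro h
        have := congrArg Fin.val h
        simp [hz0] at this⟩
    have hmem0 : ∀ i, z0 ∈ ((ι i : G.edgeSet) : Sym2 (Fin n)) := fun i => by
      simp [ι]
    have hinj : Function.Injective ι := by
      intro i j hij
      have : (s(z0, (⟨i.val + 1, by omega⟩ : Fin n)) : Sym2 (Fin n))
          = s(z0, (⟨j.val + 1, by omega⟩ : Fin n)) := congrArg Subtype.val hij
      rw [Sym2.eq_iff] at this
      rcases this with ⟨-, h⟩ | ⟨h, -⟩
      · exact Fin.ext (by have := congrArg Fin.val h; simpa using this)
      · exact absurd (congrArg Fin.val h) (by simp [hz0])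
    have hclique : G.lineGraph.IsClique ↑(Finset.univ.image ι) := by
      intro x hx y hy hxy
      simp only [Finset.coe_image, Finset.coe_univ, Set.image_univ, Set.mem_range] at hx hy
      obtain ⟨i, rfl⟩ := hx
      obtain ⟨j, rfl⟩ := hy
      rw [SimpleGraph.lineGraph_adj_iff_exists]
      exact ⟨hxy, z0, hmem0 i, hmem0 j⟩
    have hcards : (Finset.univ.image ι).card = m := by
      rw [Finset.card_image_of_injective _ hinj, Finset.card_univ, Fintype.card_fin]
    have := hclique.card_le_chromaticNumber
    rwa [hcards] at this
  exact le_antisymm upper lower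
end

section
/- For every odd natural number n ≥ 3, the chromatic index of the complete graph K_n on n vertices equals n. -/
open Finset SimpleGraph

private def sym2Finset {α : Type*} [DecidableEq α] : Sym2 α → Finset α :=
  Sym2.lift ⟨fun a b => {a, b}, fun a b => Finset.pair_comm a b⟩

private lemma mem_sym2Finset {α : Type*} [DecidableEq α] {v : α} {z : Sym2 α} :
    v ∈ sym2Finset z ↔ v ∈ z := by
  induction z using Sym2.ind with
  | _ a b => simp [sym2Finset, Sym2.mem_iff]

private lemma sym2_support_card {α : Type*} [DecidableEq α] (z : Sym2 α) (h : ¬ z.IsDiag) :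
    (sym2Finset z).card = 2 := by
  induction z using Sym2.ind with
  | _ a b =>
    rw [Sym2.isDiag_iff_proj_eq] at h
    simp [sym2Finset, Finset.card_insert_of_notMem, h]

private lemma complete_line_colorable (n : ℕ) (hn : 3 ≤ n) :
    ((⊤ : SimpleGraph (Fin n)).lineGraph).Colorable n := by
  have : NeZero n := ⟨by omega⟩
  have hcard : Fintype.card (ZMod n) = n := ZMod.card n
  let f : Sym2 (Fin n) → ZMod n :=
    Sym2.lift ⟨fun a b => ((a.val : ZMod n) + (b.val : ZMod n)), fun a b => add_comm _ _⟩
  have hinj : ∀ a b : Fin n, ((a.val : ZMod n) = (b.val : ZMod n)) → a = b := by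
    intro a b hab
    have := congrArg ZMod.val hab
    rwa [ZMod.val_cast_of_lt a.isLt, ZMod.val_cast_of_lt b.isLt, ← Fin.ext_iff] at this
  let C : ((⊤ : SimpleGraph (Fin n)).lineGraph).Coloring (ZMod n) :=
    SimpleGraph.Coloring.mk (fun e => f e.val) (by
      rintro e₁ e₂ hadj
      rw [SimpleGraph.lineGraph_adj_iff_exists] at hadj
      obtain ⟨hne, v, hv1, hv2⟩ := hadj
      obtain ⟨a, ha⟩ := Sym2.mem_iff_exists.mp hv1
      obtain ⟨b, hb⟩ := Sym2.mem_iff_exists.mp hv2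
      intro hcc
      apply hne
      apply Subtype.ext
      rw [ha, hb]
      have : f e₁.val = f e₂.val := hcc
      rw [ha, hb] at this
      simp only [f, Sym2.lift_mk] at this
      have hab : a = b := hinj _ _ (add_left_cancel this)
      rw [hab])
  simpa [hcard] using C.colorable

/-- For every odd `n ≥ 3`, the chromatic index of the complete graph `K_n`
(the chromatic number of its line graph) equals `n`. -/
theorem chromatic_index_complete_odd (n : ℕ) (hn : 3 ≤ n) (ho : Odd n) :
    ((⊤ : SimpleGraph (Fin n)).lineGraph).chromaticNumber = (n : ℕ∞) := by
  have hne : NeZero n := ⟨by omega⟩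
  apply le_antisymm
  · rw [SimpleGraph.chromaticNumber_le_iff_colorable]
    exact complete_line_colorable n hn
  · rw [SimpleGraph.chromaticNumber_eq_biInf]
    refine le_iInf₂ fun m hm => ?_
    simp only [Nat.cast_le]
    by_contra hmn
    push_neg at hmn
    obtain ⟨C⟩ := hm
    classical
    set G : SimpleGraph (Fin n) := ⊤ with hG
    -- total number of edges
    have htot : Fintype.card G.edgeSet = n.choose 2 := by
      rw [← SimpleGraph.edgeFinset_card, SimpleGraph.card_edgeFinset_top_eq_card_choose_two,
        Fintype.card_fin]
    -- fiberwise count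
    have hsum : (univ : Finset G.edgeSet).card
        = ∑ k : Fin m, (univ.filter fun e => C e = k).card :=
      Finset.card_eq_sum_card_fiberwise (fun e _ => Finset.mem_univ (C e))
    obtain ⟨K, hK⟩ := ho
    have hfiber : ∀ k : Fin m, (univ.filter fun e : G.edgeSet => C e = k).card ≤ K := by
      intro k
      set s := (univ.filter fun e : G.edgeSet => C e = k) with hs
      let g : G.edgeSet → Finset (Fin n) := fun e => sym2Finset e.val
      have hdisj : ∀ e ∈ s, ∀ e' ∈ s, e ≠ e' → Disjoint (g e) (g e') := by
        intro e he e' he' hne'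
        rw [Finset.disjoint_left]
        intro v hv hv'
        have hv : v ∈ e.val := mem_sym2Finset.mp hv
        have hv' : v ∈ e'.val := mem_sym2Finset.mp hv'
        have hadj : G.lineGraph.Adj e e' :=
          SimpleGraph.lineGraph_adj_iff_exists.mpr ⟨hne', v, hv, hv'⟩
        have := C.valid hadj
        simp only [hs, Finset.mem_filter] at he he'
        exact this (he.2.trans he'.2.symm)
      have hcardg : ∀ e ∈ s, (g e).card = 2 := by
        intro e _
        exact sym2_support_card e.val (G.not_isDiag_of_mem_edgeSet e.prop)
      have hbu : (s.biUnion g).card = 2 * s.card := by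
        rw [Finset.card_biUnion hdisj]
        rw [Finset.sum_congr rfl hcardg]
        simp [mul_comm]
      have hle : (s.biUnion g).card ≤ n := by
        simpa using Finset.card_le_card (Finset.subset_univ (s.biUnion g))
      omega
    have hsum_le : (univ : Finset G.edgeSet).card ≤ m * K := by
      rw [hsum]
      calc ∑ k : Fin m, (univ.filter fun e => C e = k).card
          ≤ ∑ _k : Fin m, K := Finset.sum_le_sum fun k _ => hfiber k
        _ = m * K := by simp [Finset.sum_const, Fintype.card_fin]
    have hchoose : n.choose 2 = n * K := by
      rw [Nat.choose_two_right, hK]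
      have h1 : 2 * K + 1 - 1 = 2 * K := by omega
      have h2 : (2 * K + 1) * (2 * K) = ((2 * K + 1) * K) * 2 := by ring
      rw [h1, h2, Nat.mul_div_cancel _ (by norm_num)]
    have hcardu : (univ : Finset G.edgeSet).card = n * K := by
      rw [Finset.card_univ, htot, hchoose]
    have hK1 : 1 ≤ K := by omega
    have hnm : n * K ≤ m * K := hcardu ▸ hsum_le
    have : n ≤ m := Nat.le_of_mul_le_mul_right hnm hK1
    omega
end

section
/- For every even natural number n ≥ 2, the edge set of the complete graph K_n on n vertices can be partitioned into n − 1 perfect matchings (a round-robin schedule: n − 1 rounds in which every vertex plays exactly once per round). -/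
/-- For every even `n ≥ 2`, the edge set of the complete graph `K_n` can be partitioned
into `n - 1` perfect matchings: sets of edges no two of which share an endpoint, in which
every vertex is covered, that are pairwise disjoint, and whose union is the whole edge set. -/
theorem complete_graph_round_robin (n : ℕ) (hn : 2 ≤ n) (he : Even n) :
    ∃ M : Fin (n - 1) → Set (Sym2 (Fin n)),
      (∀ i, M i ⊆ (⊤ : SimpleGraph (Fin n)).edgeSet) ∧
      (∀ i, ∀ e ∈ M i, ∀ f ∈ M i, e ≠ f → ∀ v : Fin n, ¬(v ∈ e ∧ v ∈ f)) ∧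
      (∀ i, ∀ v : Fin n, ∃ e ∈ M i, v ∈ e) ∧
      (Pairwise fun i j => Disjoint (M i) (M j)) ∧
      (⋃ i, M i) = (⊤ : SimpleGraph (Fin n)).edgeSet := by
  set m := n - 1 with hm
  haveI : NeZero m := ⟨by omega⟩
  have hmn : m < n := by omega
  have hodd : Odd m := Nat.Even.sub_odd (by omega) he odd_one
  have h2 : IsUnit (2 : ZMod m) := by
    rw [show ((2 : ZMod m) = ((2 : ℕ) : ZMod m)) by push_cast; ring]
    exact (ZMod.isUnit_iff_coprime 2 m).mpr (Nat.coprime_two_left.mpr hodd)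
  set L : Fin n := ⟨m, hmn⟩ with hL
  have hvlt : ∀ v : Fin n, v ≠ L → v.val < m := by
    intro v hv
    have := v.isLt
    rcases Nat.lt_or_ge v.val m with h | h
    · exact h
    · exact absurd (Fin.ext (by simp [hL]; omega)) hv
  set f : Fin n → Fin n → ZMod m := fun a b =>
    if a = L then 2 * (b.val : ZMod m)
    else if b = L then 2 * (a.val : ZMod m)
    else (a.val : ZMod m) + (b.val : ZMod m) with hf
  have hsymm : ∀ a b, f a b = f b a := by
    intro a b
    by_cases ha : a = L <;> by_cases hb : b = L <;> simp [hf, ha, hb]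
    ring
  set col : Sym2 (Fin n) → ZMod m := Sym2.lift ⟨f, hsymm⟩ with hcol
  have hcolmk : ∀ a b, col s(a, b) = f a b := fun a b => rfl
  -- cast injectivity
  have hcastinj : ∀ a b : Fin n, a ≠ L → b ≠ L →
      ((a.val : ZMod m) = (b.val : ZMod m)) → a = b := by
    intro a b ha hb h
    have ha' := ZMod.val_cast_of_lt (hvlt a ha)
    have hb' := ZMod.val_cast_of_lt (hvlt b hb)
    refine Fin.ext ?_
    rw [← ha', ← hb', h]
  -- key injectivity
  have hkey : ∀ v x y : Fin n, x ≠ v → y ≠ v → col s(v, x) = col s(v, y) → x = y := by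
    intro v x y hx hy h
    rw [hcolmk, hcolmk] at h
    by_cases hv : v = L
    · subst hv
      simp only [hf, if_pos rfl] at h
      exact hcastinj x y hx hy (h2.mul_left_cancel h)
    · by_cases hxL : x = L <;> by_cases hyL : y = L
      · rw [hxL, hyL]
      · simp only [hf, if_neg hv, if_pos hxL, if_neg hyL] at h
        have : (v.val : ZMod m) = (y.val : ZMod m) := by
          have : (v.val : ZMod m) + v.val = v.val + y.val := by rw [← h]; ring
          exact add_left_cancel this
        exact absurd (hcastinj v y hv hyL this).symm hy
      · simp only [hf, if_neg hv, if_neg hxL, if_pos hyL] at h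
        have : (x.val : ZMod m) = (v.val : ZMod m) := by
          have : (v.val : ZMod m) + x.val = v.val + v.val := by rw [h]; ring
          exact add_left_cancel this
        exact absurd (hcastinj x v hxL hv this) hx
      · simp only [hf, if_neg hv, if_neg hxL, if_neg hyL] at h
        exact hcastinj x y hxL hyL (add_left_cancel h)
  -- existence
  have hexist : ∀ (i : ZMod m) (v : Fin n), ∃ x : Fin n, x ≠ v ∧ col s(v, x) = i := by
    intro i v
    by_cases hv : v = L
    · obtain ⟨u, hu⟩ := h2
      set z : ZMod m := ↑u⁻¹ * i with hz
      have hz2 : 2 * z = i := by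
        rw [hz, ← hu, ← mul_assoc]
        simp
      refine ⟨⟨z.val, lt_of_lt_of_le (ZMod.val_lt z) hmn.le⟩, ?_, ?_⟩
      · intro hc
        rw [hv] at hc
        have : z.val = m := congrArg Fin.val hc
        have := ZMod.val_lt z
        omega
      · rw [hcolmk, hv]
        simp only [hf, if_pos rfl]
        rw [show ((z.val : ZMod m) = z) from by simp [ZMod.natCast_val, ZMod.cast_id]]
        exact hz2
    · set z : ZMod m := i - (v.val : ZMod m) with hz
      by_cases hzz : z = (v.val : ZMod m)
      · refine ⟨L, fun hc => hv hc.symm, ?_⟩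
        rw [hcolmk]
        simp only [hf, if_neg hv, if_pos rfl, if_true]
        have h' : z = (v.val : ZMod m) := hzz
        rw [hz] at h'
        linear_combination -h'
      · refine ⟨⟨z.val, lt_of_lt_of_le (ZMod.val_lt z) hmn.le⟩, ?_, ?_⟩
        · intro hc
          apply hzz
          have : z.val = v.val := congrArg Fin.val hc
          rw [← this]
          simp [ZMod.natCast_val, ZMod.cast_id]
        · have hxL : (⟨z.val, lt_of_lt_of_le (ZMod.val_lt z) hmn.le⟩ : Fin n) ≠ L := by
            intro hc
            have : z.val = m := congrArg Fin.val hc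
            have := ZMod.val_lt z
            omega
          rw [hcolmk]
          simp only [hf, if_neg hv, if_neg hxL]
          have : ((z.val : ZMod m)) = z := by simp [ZMod.natCast_val, ZMod.cast_id]
          rw [this, hz]; ring
  refine ⟨fun i => {e | e ∈ (⊤ : SimpleGraph (Fin n)).edgeSet ∧ col e = (i.val : ZMod m)}, ?_, ?_, ?_, ?_, ?_⟩
  · intro i e he; exact he.1
  · rintro i e ⟨heE, heC⟩ g ⟨hgE, hgC⟩ hne v ⟨hve, hvg⟩
    obtain ⟨x, hx⟩ := (Sym2.mem_iff_exists).mp hve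
    obtain ⟨y, hy⟩ := (Sym2.mem_iff_exists).mp hvg
    subst hx; subst hy
    have hxv : x ≠ v := by
      intro hc; subst hc
      exact ((SimpleGraph.mem_edgeSet _).mp heE).ne rfl
    have hyv : y ≠ v := by
      intro hc; subst hc
      exact ((SimpleGraph.mem_edgeSet _).mp hgE).ne rfl
    exact hne (by rw [hkey v x y hxv hyv (heC.trans hgC.symm)])
  · intro i v
    obtain ⟨x, hx, hcx⟩ := hexist (i.val : ZMod m) v
    exact ⟨s(v, x), ⟨(SimpleGraph.mem_edgeSet _).mpr (by simp only [SimpleGraph.top_adj]; exact fun hc => hx hc.symm), hcx⟩, Sym2.mem_mk_left v x⟩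
  · intro i j hij
    rw [Set.disjoint_left]
    rintro e ⟨_, hei⟩ ⟨_, hej⟩
    apply hij
    have : (i.val : ZMod m).val = (j.val : ZMod m).val := by rw [hei.symm.trans hej]
    rw [ZMod.val_cast_of_lt i.isLt, ZMod.val_cast_of_lt j.isLt] at this
    exact Fin.ext this
  · ext e
    simp only [Set.mem_iUnion, Set.mem_setOf_eq]
    constructor
    · rintro ⟨i, hi, _⟩; exact hi
    · intro he
      refine ⟨⟨(col e).val, ZMod.val_lt _⟩, he, ?_⟩
      simp [ZMod.natCast_val, ZMod.cast_id]
end
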